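/- Let n be a positive integer and B = ((n+1)(n+2)/2)^{1/n}. Then the ratio of the integrals J_n(0) = ∫_0^B uⁿ·√(u² − 2u^{n+2}/((n+1)(n+2))) du and J_0(0) = ∫_0^B √(u² − 2u^{n+2}/((n+1)(n+2))) du equals J_n(0)/J_0(0) = 2(n+1)(n+2)/(3n+4). -/

import Mathlib

lemma hasDerivAt_mul_sqrt (x : ℝ) :
    HasDerivAt (fun y : ℝ => y * Real.sqrt y) (3 / 2 * Real.sqrt x) x := by
  rcases lt_trichotomy x 0 with hx | rfl | hx
  · have h0 : Real.sqrt x = 0 := Real.sqrt_eq_zero_of_nonpos hx.le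
    have hev : (fun y : ℝ => y * Real.sqrt y) =ᶠ[nhds x] fun _ => 0 := by
      filter_upwards [gt_mem_nhds hx] with y hy
      rw [Real.sqrt_eq_zero_of_nonpos hy.le, mul_zero]
    rw [h0, mul_zero]
    exact (hasDerivAt_const x 0).congr_of_eventuallyEq hev
  · rw [Real.sqrt_zero, mul_zero, hasDerivAt_iff_tendsto_slope]
    have hs : ∀ y ∈ ({(0:ℝ)}ᶜ : Set ℝ), Real.sqrt y = slope (fun y : ℝ => y * Real.sqrt y) 0 y := by
      intro y hy
      simp only [Set.mem_compl_iff, Set.mem_singleton_iff] at hy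
      rw [slope_def_field]
      field_simp
      ring
    have := Real.continuous_sqrt.continuousAt (x := (0:ℝ))
    rw [ContinuousAt, Real.sqrt_zero] at this
    exact (this.mono_left nhdsWithin_le_nhds).congr' (Filter.eventuallyEq_of_mem self_mem_nhdsWithin hs)
  · have hs := Real.hasDerivAt_sqrt hx.ne'
    have h := (hasDerivAt_id x).mul hs
    refine h.congr_deriv ?_
    simp only [id]
    have h1 : Real.sqrt x > 0 := Real.sqrt_pos.mpr hx
    have h2 : Real.sqrt x * Real.sqrt x = x := Real.mul_self_sqrt hx.le
    field_simp
    nlinarith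

theorem stmt_17 (n : ℕ) (hn : 1 ≤ n) :
    (∫ u in (0 : ℝ)..((((n : ℝ) + 1) * ((n : ℝ) + 2) / 2) ^ ((1 : ℝ) / n)),
        u ^ n * Real.sqrt (u ^ 2 - 2 * u ^ (n + 2) / (((n : ℝ) + 1) * ((n : ℝ) + 2)))) /
      (∫ u in (0 : ℝ)..((((n : ℝ) + 1) * ((n : ℝ) + 2) / 2) ^ ((1 : ℝ) / n)),
        Real.sqrt (u ^ 2 - 2 * u ^ (n + 2) / (((n : ℝ) + 1) * ((n : ℝ) + 2)))) =
      2 * ((n : ℝ) + 1) * ((n : ℝ) + 2) / (3 * (n : ℝ) + 4) := by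
  have hn0 : (0:ℝ) < (n:ℝ) := by exact_mod_cast hn
  set c : ℝ := ((n : ℝ) + 1) * ((n : ℝ) + 2) / 2 with hc_def
  have hc : (0:ℝ) < c := by positivity
  set B : ℝ := c ^ ((1:ℝ)/n) with hB_def
  have hB : (0:ℝ) < B := Real.rpow_pos_of_pos hc _
  have hBn : B ^ n = c := by
    rw [hB_def, ← Real.rpow_natCast (c ^ ((1:ℝ)/n)) n, ← Real.rpow_mul hc.le,
      one_div, inv_mul_cancel₀ (ne_of_gt hn0), Real.rpow_one]
  set g : ℝ → ℝ := fun u => u ^ 2 - 2 * u ^ (n + 2) / (((n : ℝ) + 1) * ((n : ℝ) + 2)) with hg_def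
  have hg_fact : ∀ u : ℝ, g u = u ^ 2 * (1 - u ^ n / c) := by
    intro u
    have h12 : ((n:ℝ) + 1) * ((n:ℝ) + 2) ≠ 0 := by positivity
    rw [hg_def]
    field_simp [hc_def]
    ring
  clear_value B
  clear_value c
  -- continuity of integrands
  have hcontg : Continuous g := by fun_prop
  have hcont0 : Continuous fun u : ℝ => Real.sqrt (g u) := Real.continuous_sqrt.comp hcontg
  have hcontn : Continuous fun u : ℝ => u ^ n * Real.sqrt (g u) :=
    (continuous_pow n).mul hcont0
  set K : ℝ := (3 * (n:ℝ) + 4) / (2 * c) with hK_def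
  have hK : (0:ℝ) < K := by positivity
  -- the FTC function
  set F : ℝ → ℝ := fun u => u ^ 2 * ((1 - u ^ n / c) * Real.sqrt (1 - u ^ n / c)) with hF_def
  have hderiv : ∀ u ∈ Set.uIcc (0:ℝ) B,
      HasDerivAt F (2 * Real.sqrt (g u) - K * (u ^ n * Real.sqrt (g u))) u := by
    intro u hu
    rw [Set.uIcc_of_le hB.le] at hu
    obtain ⟨hu0, huB⟩ := hu
    have hun : u ^ n ≤ c := by
      calc u ^ n ≤ B ^ n := pow_le_pow_left₀ hu0 huB n
        _ = c := hBn
    have ht0 : (0:ℝ) ≤ 1 - u ^ n / c := by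
      rw [sub_nonneg, div_le_one hc]; exact hun
    have h1 : HasDerivAt (fun u : ℝ => 1 - u ^ n / c) (-((n:ℝ) * u ^ (n-1) / c)) u := by
      have := (hasDerivAt_pow n u).div_const c
      exact ((hasDerivAt_const u (1:ℝ)).sub this).congr_deriv (by ring)
    have h2 := (hasDerivAt_mul_sqrt (1 - u ^ n / c)).comp u h1
    have h3 := ((hasDerivAt_pow 2 u)).mul h2
    have hF' : HasDerivAt F
        (2 * u ^ 1 * ((1 - u ^ n / c) * Real.sqrt (1 - u ^ n / c)) +
          u ^ 2 * (3 / 2 * Real.sqrt (1 - u ^ n / c) * (-((n:ℝ) * u ^ (n-1) / c)))) u := by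
      exact h3.congr_deriv (by norm_num)
    convert hF' using 1
    -- algebraic identity on [0,B]
    have hsg : Real.sqrt (g u) = u * Real.sqrt (1 - u ^ n / c) := by
      rw [hg_fact u, Real.sqrt_mul (sq_nonneg u), Real.sqrt_sq hu0]
    rw [hsg]
    have hpow : u ^ 2 * u ^ (n - 1) = u * u ^ n := by
      rw [← pow_succ', ← pow_add]
      congr 1
      omega
    have hexp : u ^ 2 * (3 / 2 * Real.sqrt (1 - u ^ n / c) * (-((n:ℝ) * u ^ (n-1) / c)))
        = -(3 * (n:ℝ) / (2 * c)) * (u * u ^ n) * Real.sqrt (1 - u ^ n / c) := by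
      rw [show u ^ 2 * (3 / 2 * Real.sqrt (1 - u ^ n / c) * (-((n:ℝ) * u ^ (n-1) / c)))
          = -(3 * (n:ℝ) / (2 * c)) * (u ^ 2 * u ^ (n-1)) * Real.sqrt (1 - u ^ n / c) by ring,
        hpow]
    rw [hexp, hK_def]
    have hcne : c ≠ 0 := hc.ne'
    field_simp
    ring
  -- FTC
  have hint : IntervalIntegrable (fun u => 2 * Real.sqrt (g u) - K * (u ^ n * Real.sqrt (g u)))
      MeasureTheory.volume 0 B := by
    apply Continuous.intervalIntegrable
    fun_prop
  have hFTC := intervalIntegral.integral_eq_sub_of_hasDerivAt hderiv hint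
  have hF0 : F 0 = 0 := by simp [hF_def]
  have hFB : F B = 0 := by
    rw [hF_def]
    simp only
    rw [hBn, div_self hc.ne', sub_self, zero_mul, mul_zero]
  rw [hF0, hFB, sub_zero] at hFTC
  have hi0 : IntervalIntegrable (fun u => Real.sqrt (g u)) MeasureTheory.volume 0 B :=
    hcont0.intervalIntegrable _ _
  have hin : IntervalIntegrable (fun u => u ^ n * Real.sqrt (g u)) MeasureTheory.volume 0 B :=
    hcontn.intervalIntegrable _ _
  set I0 : ℝ := ∫ u in (0:ℝ)..B, Real.sqrt (g u) with hI0_def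
  set In : ℝ := ∫ u in (0:ℝ)..B, u ^ n * Real.sqrt (g u) with hIn_def
  have hsplit : (∫ u in (0:ℝ)..B, (2 * Real.sqrt (g u) - K * (u ^ n * Real.sqrt (g u))))
      = 2 * I0 - K * In := by
    rw [intervalIntegral.integral_sub ((hi0.const_mul 2)) (hin.const_mul K),
      intervalIntegral.integral_const_mul, intervalIntegral.integral_const_mul]
  have hkey : 2 * I0 - K * In = 0 := by rw [← hsplit, hFTC]
  -- positivity of I0
  have hI0pos : 0 < I0 := by
    apply intervalIntegral.intervalIntegral_pos_of_pos_on hi0 _ hB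
    intro u hu
    obtain ⟨hu0, huB⟩ := hu
    apply Real.sqrt_pos.mpr
    rw [hg_fact u]
    have hun : u ^ n < c := by
      calc u ^ n < B ^ n := by
            apply pow_lt_pow_left₀ huB hu0.le
            omega
        _ = c := hBn
    have : 0 < 1 - u ^ n / c := by
      rw [sub_pos, div_lt_one hc]; exact hun
    positivity
  -- conclude
  have hIn_eq : In = (2 * ((n:ℝ) + 1) * ((n:ℝ) + 2) / (3 * (n:ℝ) + 4)) * I0 := by
    have h34 : (0:ℝ) ≠ 3 * (n:ℝ) + 4 := by positivity
    have h1 : In = 2 * I0 / K := by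
      rw [eq_div_iff hK.ne']
      linarith [hkey]
    rw [h1, hK_def, hc_def]
    have h12 : ((n:ℝ) + 1) * ((n:ℝ) + 2) ≠ 0 := by positivity
    have h34' : (3 * (n:ℝ) + 4) ≠ 0 := by positivity
    field_simp
  rw [hIn_eq, mul_div_assoc, div_self hI0pos.ne', mul_one]
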